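/- Let T be a thick tree with loops with sink s, and let Λ ⊆ ℤ^{V₀} be the lattice spanned by the rows of the toppling matrix Δ. Then Λ = { v ∈ ℤ^{V₀} : e_{j,p(j)} divides ∑_{i ⪰ j} v_i for all j ∈ V₀ }. -/
import Mathlib


namespace SandpilePaper

variable {V : Type*} [Fintype V] [DecidableEq V]

/-- Configurations: assignments of numbers of grains to ordinary (non-sink) vertices. -/
abbrev Conf (s : V) : Type _ := {i : V // i ≠ s} → ℕ

/-- The degree of a vertex: `deg i = ∑ j, e i j`. -/
def deg (e : V → V → ℕ) (i : V) : ℕ := ∑ j, e i j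

/-- Toppling the (unstable) vertex `i`. -/
def toppleAt (e : V → V → ℕ) (s : V) (i : {i : V // i ≠ s}) (u : Conf s) : Conf s :=
  fun j => if j = i then u i - deg e i.1 + e i.1 i.1 else u j + e i.1 j.1

/-- One toppling step: some unstable vertex topples. -/
def Topple (e : V → V → ℕ) (s : V) (u v : Conf s) : Prop :=
  ∃ i : {i : V // i ≠ s}, deg e i.1 ≤ u i ∧ v = toppleAt e s i u

/-- A configuration is stable if every ordinary vertex has fewer grains than its degree. -/
def Stable (e : V → V → ℕ) (s : V) (u : Conf s) : Prop :=
  ∀ j : {i : V // i ≠ s}, u j < deg e j.1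

/-- The underlying simple graph: edges between distinct vertices with positive multiplicity. -/
def graph (e : V → V → ℕ) : SimpleGraph V := SimpleGraph.fromRel fun i j => 0 < e i j

/-- `σ` is a stabilization map: `σ u` is stable and reached from `u` by finitely many topplings. -/
def IsStabilization (e : V → V → ℕ) (s : V) (σ : Conf s → Conf s) : Prop :=
  ∀ u, Stable e s (σ u) ∧ Relation.ReflTransGen (Topple e s) u (σ u)

/-- A stable configuration `u` is recurrent if every configuration can reach it. -/
def Recurrent (e : V → V → ℕ) (s : V) (σ : Conf s → Conf s) (u : Conf s) : Prop :=
  Stable e s u ∧ ∀ v : Conf s, ∃ w : Conf s, σ (v + w) = u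

/-- Apply a sequence of topplings. -/
def applySeq (e : V → V → ℕ) (s : V) (u : Conf s) : List {i : V // i ≠ s} → Conf s
  | [] => u
  | i :: L => applySeq e s (toppleAt e s i u) L

/-- A toppling sequence is valid if each toppled vertex is unstable when toppled. -/
def ValidSeq (e : V → V → ℕ) (s : V) (u : Conf s) : List {i : V // i ≠ s} → Prop
  | [] => True
  | i :: L => deg e i.1 ≤ u i ∧ ValidSeq e s (toppleAt e s i u) L

/-- `succeq e s i j` means `i ⪰ j`: `j` lies on the unique path from `i` to the sink `s`. -/
def succeq (e : V → V → ℕ) (s i j : V) : Prop :=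
  (graph e).dist i s = (graph e).dist i j + (graph e).dist j s

noncomputable instance (e : V → V → ℕ) (s i j : V) : Decidable (succeq e s i j) := Nat.decEq _ _

/-- `p` assigns to each ordinary vertex its parent: its neighbor on the path to the sink. -/
def IsParent (e : V → V → ℕ) (s : V) (p : {i : V // i ≠ s} → V) : Prop :=
  ∀ j : {i : V // i ≠ s}, (graph e).Adj j.1 (p j) ∧
    (graph e).dist (p j) s + 1 = (graph e).dist j.1 s

/-- The set `{i : i ⪰ j}`. -/
noncomputable def descendants (e : V → V → ℕ) (s : V) (j : {i : V // i ≠ s}) :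
    Finset {i : V // i ≠ s} :=
  Finset.univ.filter fun i => succeq e s i.1 j.1

/-- The set `{i : i ≻ j}`. -/
noncomputable def strictDescendants (e : V → V → ℕ) (s : V) (j : {i : V // i ≠ s}) :
    Finset {i : V // i ≠ s} :=
  Finset.univ.filter fun i => i ≠ j ∧ succeq e s i.1 j.1

/-- `j` is a leaf: its parent is its only neighbor in the underlying tree. -/
def IsLeaf (e : V → V → ℕ) (s : V) (p : {i : V // i ≠ s} → V) (j : {i : V // i ≠ s}) : Prop :=
  ∀ k : V, (graph e).Adj j.1 k → k = p j

/-- Rows of the toppling matrix `Δ`. -/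
def deltaRow (e : V → V → ℕ) (s : V) (i j : {i : V // i ≠ s}) : ℤ :=
  if i = j then (deg e i.1 : ℤ) - (e i.1 i.1 : ℤ) else -(e i.1 j.1 : ℤ)

/-- The lattice `Λ` spanned by the rows of the toppling matrix. -/
def lattice (e : V → V → ℕ) (s : V) : AddSubgroup ({i : V // i ≠ s} → ℤ) :=
  AddSubgroup.closure (Set.range (deltaRow e s))

/-- The map `φ(u)_j = ∑_{i ⪰ j} u_i (mod e_{j,p(j)})`. -/
noncomputable def phi (e : V → V → ℕ) (s : V) (p : {i : V // i ≠ s} → V) (u : Conf s)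
    (j : {i : V // i ≠ s}) : ZMod (e j.1 (p j)) :=
  ∑ i ∈ descendants e s j, (u i : ZMod (e j.1 (p j)))

/-- The map `φ` on integer vectors. -/
noncomputable def phiZ (e : V → V → ℕ) (s : V) (p : {i : V // i ≠ s} → V) (u : {i : V // i ≠ s} → ℤ)
    (j : {i : V // i ≠ s}) : ZMod (e j.1 (p j)) :=
  ∑ i ∈ descendants e s j, (u i : ZMod (e j.1 (p j)))


section Toolbox
open SimpleGraph Finset

variable {e : V → V → ℕ} {s : V}

private lemma dist_tri (ht : (graph e).IsTree) (u v w : V) :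
    (graph e).dist u w ≤ (graph e).dist u v + (graph e).dist v w :=
  ht.isConnected.dist_triangle

lemma succeq_refl' (j : V) : succeq e s j j := by
  simp [succeq, SimpleGraph.dist_self]

lemma not_succeq_sink (ht : (graph e).IsTree) {j : V} (hj : j ≠ s) : ¬ succeq e s s j := by
  intro h
  have h1 : (graph e).dist s s = 0 := SimpleGraph.dist_self
  have h2 : 0 < (graph e).dist j s := ht.isConnected.pos_dist_of_ne hj
  unfold succeq at h
  omega

lemma succeq_trans (ht : (graph e).IsTree) {i j k : V}
    (h1 : succeq e s i j) (h2 : succeq e s j k) : succeq e s i k := by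
  unfold succeq at *
  have t1 := dist_tri ht i k s
  have t2 := dist_tri ht i j k
  omega

lemma succeq_antisymm (ht : (graph e).IsTree) {i j : V}
    (h1 : succeq e s i j) (h2 : succeq e s j i) : i = j := by
  unfold succeq at *
  have hc : (graph e).dist i j = (graph e).dist j i := SimpleGraph.dist_comm
  have h0 : (graph e).dist i j = 0 := by omega
  exact (ht.isConnected.dist_eq_zero_iff).mp h0

lemma succeq_of_mem_support (ht : (graph e).IsTree) {i j : V} (W : (graph e).Walk i s)
    (hW : W.length = (graph e).dist i s) (hj : j ∈ W.support) : succeq e s i j := by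
  have hspec := congrArg Walk.length (W.take_spec hj)
  rw [Walk.length_append] at hspec
  have h1 : (graph e).dist i j ≤ (W.takeUntil j hj).length := SimpleGraph.dist_le _
  have h2 : (graph e).dist j s ≤ (W.dropUntil j hj).length := SimpleGraph.dist_le _
  have tri := dist_tri ht i j s
  unfold succeq
  omega

lemma exists_shortest_walk_mem (ht : (graph e).IsTree) {i j : V} (h : succeq e s i j) :
    ∃ W : (graph e).Walk i s, W.length = (graph e).dist i s ∧ j ∈ W.support := by
  obtain ⟨A, hA⟩ := ht.isConnected.exists_walk_length_eq_dist i j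
  obtain ⟨B, hB⟩ := ht.isConnected.exists_walk_length_eq_dist j s
  refine ⟨A.append B, ?_, ?_⟩
  · rw [Walk.length_append, hA, hB]; exact h.symm
  · rw [Walk.mem_support_append_iff]
    exact Or.inl A.end_mem_support

lemma shortest_unique (ht : (graph e).IsTree) {i : V} (W W' : (graph e).Walk i s)
    (h : W.length = (graph e).dist i s) (h' : W'.length = (graph e).dist i s) : W = W' := by
  have p1 := W.isPath_of_length_eq_dist h
  have p2 := W'.isPath_of_length_eq_dist h'
  have := ht.IsAcyclic.path_unique ⟨W, p1⟩ ⟨W', p2⟩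
  exact congrArg Subtype.val this

lemma adj_dist_ne (ht : (graph e).IsTree) {u v : V} (h : (graph e).Adj u v) :
    (graph e).dist u s ≠ (graph e).dist v s := by
  intro heq
  obtain ⟨P, hP⟩ := ht.isConnected.exists_walk_length_eq_dist u s
  obtain ⟨Q, hQ⟩ := ht.isConnected.exists_walk_length_eq_dist v s
  by_cases hW : (Walk.cons h Q).IsPath
  · have hP' := P.isPath_of_length_eq_dist hP
    have heqW := ht.IsAcyclic.path_unique ⟨Walk.cons h Q, hW⟩ ⟨P, hP'⟩
    have hl : (Walk.cons h Q).length = P.length := congrArg Walk.length (congrArg Subtype.val heqW)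
    rw [Walk.length_cons, hQ, hP] at hl
    omega
  · have hQp := Q.isPath_of_length_eq_dist hQ
    rw [Walk.cons_isPath_iff] at hW
    push_neg at hW
    have hu : u ∈ Q.support := hW hQp
    have hspec := congrArg Walk.length (Q.take_spec hu)
    rw [Walk.length_append] at hspec
    have h1 : (graph e).dist u s ≤ (Q.dropUntil u hu).length := SimpleGraph.dist_le _
    have h2 : (graph e).dist v u ≤ (Q.takeUntil u hu).length := SimpleGraph.dist_le _
    have h3 : 0 < (graph e).dist v u := ht.isConnected.pos_dist_of_ne h.ne'
    omega

lemma adj_dist_cases (ht : (graph e).IsTree) {u v : V} (h : (graph e).Adj u v) :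
    (graph e).dist u s + 1 = (graph e).dist v s ∨
      (graph e).dist v s + 1 = (graph e).dist u s := by
  have h1 : (graph e).dist u v = 1 := (SimpleGraph.dist_eq_one_iff_adj).mpr h
  have h2 : (graph e).dist v u = 1 := by rw [SimpleGraph.dist_comm]; exact h1
  have t1 := dist_tri ht u v s
  have t2 := dist_tri ht v u s
  have hne := adj_dist_ne (s := s) ht h
  omega

lemma succeq_step (ht : (graph e).IsTree) {i k : V} (hik : (graph e).Adj i k)
    (hd : (graph e).dist i s + 1 = (graph e).dist k s) (j : V) :
    succeq e s k j ↔ (k = j ∨ succeq e s i j) := by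
  constructor
  · intro h
    by_cases hkj : k = j
    · exact Or.inl hkj
    right
    obtain ⟨Q, hQ⟩ := ht.isConnected.exists_walk_length_eq_dist i s
    obtain ⟨C, hC, hjC⟩ := exists_shortest_walk_mem ht h
    have hWlen : (Walk.cons hik.symm Q).length = (graph e).dist k s := by
      rw [Walk.length_cons, hQ]; omega
    have hCW : C = Walk.cons hik.symm Q := shortest_unique ht C _ hC hWlen
    rw [hCW, Walk.support_cons, List.mem_cons] at hjC
    rcases hjC with h' | h'
    · exact absurd h'.symm hkj
    · exact succeq_of_mem_support ht Q hQ h'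
  · rintro (rfl | h)
    · exact succeq_refl' k
    · unfold succeq at h ⊢
      have t1 := dist_tri ht k j s
      have t2 := dist_tri ht k i j
      have hki : (graph e).dist k i = 1 := (SimpleGraph.dist_eq_one_iff_adj).mpr hik.symm
      omega

lemma parent_unique (ht : (graph e).IsTree) {j k k' : V} (h : (graph e).Adj j k)
    (h' : (graph e).Adj j k') (hd : (graph e).dist k s + 1 = (graph e).dist j s)
    (hd' : (graph e).dist k' s + 1 = (graph e).dist j s) : k = k' := by
  obtain ⟨Q, hQ⟩ := ht.isConnected.exists_walk_length_eq_dist k s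
  obtain ⟨Q', hQ'⟩ := ht.isConnected.exists_walk_length_eq_dist k' s
  have hl : (Walk.cons h Q).length = (graph e).dist j s := by rw [Walk.length_cons, hQ]; omega
  have hl' : (Walk.cons h' Q').length = (graph e).dist j s := by rw [Walk.length_cons, hQ']; omega
  have heq := shortest_unique ht _ _ hl hl'
  have := congrArg (fun w => w.getVert 1) heq
  simpa [Walk.getVert_cons_succ, Walk.getVert_zero] using this

end Toolbox
section Toolbox2
set_option linter.unusedSectionVars false
open SimpleGraph Finset

variable {e : V → V → ℕ} {s : V} {p : {i : V // i ≠ s} → V}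

lemma parent_adj (hp : IsParent e s p) (j : {i : V // i ≠ s}) :
    (graph e).Adj j.1 (p j) := (hp j).1

lemma parent_dist (hp : IsParent e s p) (j : {i : V // i ≠ s}) :
    (graph e).dist (p j) s + 1 = (graph e).dist j.1 s := (hp j).2

lemma parent_ne (hp : IsParent e s p) (j : {i : V // i ≠ s}) : p j ≠ j.1 :=
  (parent_adj hp j).ne'

lemma step_iff (ht : (graph e).IsTree) (hp : IsParent e s p) (j : {i : V // i ≠ s}) (x : V) :
    succeq e s j.1 x ↔ (j.1 = x ∨ succeq e s (p j) x) :=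
  succeq_step ht (parent_adj hp j).symm (parent_dist hp j) x

lemma not_parent_succeq (ht : (graph e).IsTree) (hp : IsParent e s p) (j : {i : V // i ≠ s}) :
    ¬ succeq e s (p j) j.1 := by
  intro h
  unfold succeq at h
  have h2 := parent_dist hp j
  have h3 : 0 < (graph e).dist (p j) j.1 :=
    ht.isConnected.pos_dist_of_ne (parent_ne hp j)
  omega

lemma eq_parent (ht : (graph e).IsTree) (hp : IsParent e s p) (j : {i : V // i ≠ s}) {x : V}
    (hadj : (graph e).Adj j.1 x) (hd : (graph e).dist x s + 1 = (graph e).dist j.1 s) :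
    x = p j :=
  parent_unique ht hadj (parent_adj hp j) hd (parent_dist hp j)

lemma claimC (ht : (graph e).IsTree) (hp : IsParent e s p)
    (i j : {i : V // i ≠ s}) (x : V) :
    ((if succeq e s i.1 j.1 then (1:ℤ) else 0) - (if succeq e s x j.1 then 1 else 0))
        * (e i.1 x : ℤ)
      = (if i = j then (if x = p j then (e i.1 x : ℤ) else 0) else 0)
        - (if p j = i.1 then (if x = j.1 then (e i.1 x : ℤ) else 0) else 0) := by
  have hpd := parent_dist hp j
  have hpj_ne : p j ≠ j.1 := parent_ne hp j
  have hnps := not_parent_succeq ht hp j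
  by_cases hex : e i.1 x = 0
  · rw [hex]; push_cast; simp
  by_cases hxi : x = i.1
  · rw [hxi]
    have r1 : (if i = j then (if (i : V) = p j then (e i.1 i.1 : ℤ) else 0) else 0) = 0 := by
      split_ifs with h1 h2
      · exact absurd (h1 ▸ h2 : (j : V) = p j) (fun h => hpj_ne h.symm)
      · rfl
      · rfl
    have r2 : (if p j = i.1 then (if (i : V) = j.1 then (e i.1 i.1 : ℤ) else 0) else 0) = 0 := by
      split_ifs with h1 h2
      · exact absurd (h1.trans h2) hpj_ne
      · rfl
      · rfl
    rw [r1, r2, sub_self, sub_self, zero_mul]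
  have hadj : (graph e).Adj i.1 x := by
    rw [graph, SimpleGraph.fromRel_adj]
    exact ⟨fun h => hxi h.symm, Or.inl (Nat.pos_of_ne_zero hex)⟩
  rcases adj_dist_cases (s := s) ht hadj with hcase | hcase
  · -- dist i s + 1 = dist x s (x is farther)
    have keyA := succeq_step ht hadj hcase j.1
    by_cases hij : succeq e s i.1 j.1
    · have hxj : succeq e s x j.1 := keyA.mpr (Or.inr hij)
      have f1 : i = j → x ≠ p j := by
        rintro rfl h
        rw [h] at hcase
        omega
      have f2 : p j = i.1 → x ≠ j.1 := by
        intro hpi _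
        exact hnps (hpi ▸ hij)
      have r1 : (if i = j then (if x = p j then (e i.1 x : ℤ) else 0) else 0) = 0 := by
        split_ifs with h1 h2
        · exact absurd h2 (f1 h1)
        · rfl
        · rfl
      have r2 : (if p j = i.1 then (if x = j.1 then (e i.1 x : ℤ) else 0) else 0) = 0 := by
        split_ifs with h1 h2
        · exact absurd h2 (f2 h1)
        · rfl
        · rfl
      rw [r1, r2, if_pos hij, if_pos hxj, sub_self, sub_self, zero_mul]
    · have hinej : i ≠ j := by rintro rfl; exact hij (succeq_refl' i.1)
      by_cases hxj : x = j.1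
      · have hpi : p j = i.1 := by
          have := eq_parent ht hp j (hxj ▸ hadj).symm (by rw [← hxj]; omega)
          exact this.symm
        have hxsj : succeq e s x j.1 := by rw [hxj]; exact succeq_refl' j.1
        rw [if_neg hij, if_pos hxsj, if_neg hinej, if_pos hpi, if_pos hxj]
        ring
      · have hxsj : ¬ succeq e s x j.1 := by
          intro h
          rcases keyA.mp h with h' | h'
          · exact hxj h'
          · exact hij h'
        rw [if_neg hij, if_neg hxsj, if_neg hinej, sub_self, zero_mul]
        by_cases h1 : p j = i.1
        · rw [if_pos h1, if_neg hxj]; ring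
        · rw [if_neg h1]; ring
  · -- dist x s + 1 = dist i s (i is farther)
    have keyB := succeq_step ht hadj.symm hcase j.1
    by_cases hxj : succeq e s x j.1
    · have hij : succeq e s i.1 j.1 := keyB.mpr (Or.inr hxj)
      have f1 : i = j → x ≠ p j := by
        rintro rfl h
        exact hnps (h ▸ hxj)
      have f2 : p j = i.1 → x ≠ j.1 := by
        intro hpi hxj1
        rw [hxj1] at hcase
        rw [← hpi] at hcase
        omega
      have r1 : (if i = j then (if x = p j then (e i.1 x : ℤ) else 0) else 0) = 0 := by
        split_ifs with h1 h2
        · exact absurd h2 (f1 h1)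
        · rfl
        · rfl
      have r2 : (if p j = i.1 then (if x = j.1 then (e i.1 x : ℤ) else 0) else 0) = 0 := by
        split_ifs with h1 h2
        · exact absurd h2 (f2 h1)
        · rfl
        · rfl
      rw [r1, r2, if_pos hij, if_pos hxj, sub_self, sub_self, zero_mul]
    · rcases eq_or_ne i j with rfl | hinej
      · have hxp : x = p i := eq_parent ht hp i hadj hcase
        have hii : succeq e s i.1 i.1 := succeq_refl' i.1
        have hpii : p i ≠ i.1 := parent_ne hp i
        rw [if_pos hii, if_neg hxj, if_pos rfl, if_pos hxp, if_neg hpii]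
        ring
      · have hij : ¬ succeq e s i.1 j.1 := by
          intro h
          rcases keyB.mp h with h' | h'
          · exact hinej (Subtype.ext h')
          · exact hxj h'
        have hxj1 : x ≠ j.1 := by
          rintro rfl
          exact hxj (succeq_refl' j.1)
        rw [if_neg hij, if_neg hxj, if_neg hinej, sub_self, zero_mul]
        by_cases h1 : p j = i.1
        · rw [if_pos h1, if_neg hxj1]; ring
        · rw [if_neg h1]; ring

end Toolbox2
section Toolbox3
set_option linter.unusedSectionVars false
open SimpleGraph Finset

variable {e : V → V → ℕ} {s : V} {p : {i : V // i ≠ s} → V}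

lemma rowsum (ht : (graph e).IsTree) (hp : IsParent e s p)
    (i j : {i : V // i ≠ s}) :
    ∑ k ∈ descendants e s j, deltaRow e s i k
      = (if i = j then (e j.1 (p j) : ℤ) else 0)
        - (if p j = i.1 then (e i.1 j.1 : ℤ) else 0) := by
  classical
  have hΔ : ∀ k : {i : V // i ≠ s}, deltaRow e s i k
      = (if i = k then (deg e i.1 : ℤ) else 0) - (e i.1 k.1 : ℤ) := by
    intro k
    unfold deltaRow
    split_ifs with h
    · rw [h]
    · ring
  have hB : ∑ k : {i : V // i ≠ s}, (if succeq e s k.1 j.1 then (e i.1 k.1 : ℤ) else 0)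
      = ∑ x : V, (if succeq e s x j.1 then (e i.1 x : ℤ) else 0) := by
    rw [← Finset.sum_subtype (Finset.univ.erase s)
        (fun x => by simp [Finset.mem_erase])
        (fun x => if succeq e s x j.1 then (e i.1 x : ℤ) else 0)]
    exact Finset.sum_erase _ (by simp [not_succeq_sink ht j.2])
  have hdeg : (deg e i.1 : ℤ) = ∑ x : V, (e i.1 x : ℤ) := by
    unfold deg; push_cast; rfl
  calc ∑ k ∈ descendants e s j, deltaRow e s i k
      = ∑ k : {i : V // i ≠ s}, (if succeq e s k.1 j.1 then deltaRow e s i k else 0) := by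
        rw [descendants, Finset.sum_filter]
    _ = ∑ k : {i : V // i ≠ s},
          ((if i = k then (if succeq e s k.1 j.1 then (deg e i.1 : ℤ) else 0) else 0)
            - (if succeq e s k.1 j.1 then (e i.1 k.1 : ℤ) else 0)) := by
        refine Finset.sum_congr rfl fun k _ => ?_
        rw [hΔ k]
        by_cases h1 : succeq e s k.1 j.1 <;> by_cases h2 : i = k <;> simp [h1, h2]
    _ = (if succeq e s i.1 j.1 then (deg e i.1 : ℤ) else 0)
          - ∑ x : V, (if succeq e s x j.1 then (e i.1 x : ℤ) else 0) := by
        rw [Finset.sum_sub_distrib, Finset.sum_ite_eq Finset.univ i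
          (fun k => if succeq e s k.1 j.1 then (deg e i.1 : ℤ) else 0),
          if_pos (Finset.mem_univ i), hB]
    _ = ∑ x : V, ((if succeq e s i.1 j.1 then (1:ℤ) else 0)
          - (if succeq e s x j.1 then 1 else 0)) * (e i.1 x : ℤ) := by
        by_cases hij : succeq e s i.1 j.1
        · rw [if_pos hij, hdeg, ← Finset.sum_sub_distrib]
          refine Finset.sum_congr rfl fun x _ => ?_
          by_cases h : succeq e s x j.1 <;> simp [h, hij]
        · rw [if_neg hij, zero_sub, ← Finset.sum_neg_distrib]
          refine Finset.sum_congr rfl fun x _ => ?_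
          by_cases h : succeq e s x j.1 <;> simp [h, hij]
    _ = ∑ x : V, ((if i = j then (if x = p j then (e i.1 x : ℤ) else 0) else 0)
          - (if p j = i.1 then (if x = j.1 then (e i.1 x : ℤ) else 0) else 0)) :=
        Finset.sum_congr rfl fun x _ => claimC ht hp i j x
    _ = (if i = j then (e j.1 (p j) : ℤ) else 0)
          - (if p j = i.1 then (e i.1 j.1 : ℤ) else 0) := by
        rw [Finset.sum_sub_distrib]
        congr 1
        · by_cases h : i = j
          · rw [if_pos h]
            rw [Finset.sum_congr rfl (fun x _ => if_pos h)]
            rw [Finset.sum_ite_eq' Finset.univ (p j) (fun x => (e i.1 x : ℤ))]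
            rw [if_pos (Finset.mem_univ _), h]
          · rw [if_neg h]
            exact Finset.sum_eq_zero fun x _ => if_neg h
        · by_cases h : p j = i.1
          · rw [if_pos h]
            rw [Finset.sum_congr rfl (fun x _ => if_pos h)]
            rw [Finset.sum_ite_eq' Finset.univ (j.1 : V) (fun x => (e i.1 x : ℤ))]
            rw [if_pos (Finset.mem_univ _)]
          · rw [if_neg h]
            exact Finset.sum_eq_zero fun x _ => if_neg h

lemma desc_insert (j : {i : V // i ≠ s}) :
    descendants e s j = insert j (strictDescendants e s j) := by
  ext k
  simp only [descendants, strictDescendants, Finset.mem_insert, Finset.mem_filter,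
    Finset.mem_univ, true_and]
  constructor
  · intro h
    by_cases hkj : k = j
    · exact Or.inl hkj
    · exact Or.inr ⟨hkj, h⟩
  · rintro (rfl | ⟨_, h⟩)
    · exact succeq_refl' k.1
    · exact h

lemma not_mem_strict (j : {i : V // i ≠ s}) : j ∉ strictDescendants e s j := by
  simp [strictDescendants]

lemma strict_card_lt (ht : (graph e).IsTree) {i j : {i : V // i ≠ s}}
    (hi : i ∈ strictDescendants e s j) :
    (descendants e s i).card < (descendants e s j).card := by
  rw [strictDescendants, Finset.mem_filter] at hi
  obtain ⟨-, hne, hsuc⟩ := hi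
  apply Finset.card_lt_card
  rw [Finset.ssubset_def]
  constructor
  · intro k hk
    rw [descendants, Finset.mem_filter] at hk ⊢
    exact ⟨hk.1, succeq_trans ht hk.2 hsuc⟩
  · intro hsub
    have hj : j ∈ descendants e s i := by
      apply hsub
      rw [descendants, Finset.mem_filter]
      exact ⟨Finset.mem_univ _, succeq_refl' j.1⟩
    rw [descendants, Finset.mem_filter] at hj
    exact hne (Subtype.ext (succeq_antisymm ht hsuc hj.2))

lemma eq_zero_of_sums (ht : (graph e).IsTree) (u : {i : V // i ≠ s} → ℤ)
    (h0 : ∀ j, ∑ i ∈ descendants e s j, u i = 0) : ∀ j, u j = 0 := by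
  suffices H : ∀ n (j : {i : V // i ≠ s}), (descendants e s j).card ≤ n → u j = 0 by
    intro j; exact H _ j le_rfl
  intro n
  induction n with
  | zero =>
    intro j hj
    have hjm : j ∈ descendants e s j := by
      rw [descendants, Finset.mem_filter]
      exact ⟨Finset.mem_univ _, succeq_refl' j.1⟩
    have := Finset.card_pos.mpr ⟨j, hjm⟩
    omega
  | succ n ih =>
    intro j hj
    have h1 := h0 j
    rw [desc_insert, Finset.sum_insert (not_mem_strict j)] at h1
    have h2 : ∑ i ∈ strictDescendants e s j, u i = 0 :=
      Finset.sum_eq_zero fun i hi => ih i (by have := strict_card_lt ht hi; omega)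
    rw [h2] at h1
    omega

end Toolbox3
theorem stmt_10 (e : V → V → ℕ) (s : V) (hsym : ∀ i j : V, e i j = e j i)
    (htree : (graph e).IsTree)
    (p : {i : V // i ≠ s} → V) (hp : IsParent e s p)
    (v : {i : V // i ≠ s} → ℤ) :
    v ∈ lattice e s ↔
      ∀ j : {i : V // i ≠ s}, (e j.1 (p j) : ℤ) ∣ ∑ i ∈ descendants e s j, v i := by
  classical
  constructor
  · intro hv
    let K : AddSubgroup ({i : V // i ≠ s} → ℤ) :=
      { carrier := {u | ∀ j, (e j.1 (p j) : ℤ) ∣ ∑ i ∈ descendants e s j, u i}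
        zero_mem' := fun j => by simp
        add_mem' := by
          intro a b ha hb j
          have h : ∑ i ∈ descendants e s j, (a + b) i
              = (∑ i ∈ descendants e s j, a i) + ∑ i ∈ descendants e s j, b i := by
            simp [Finset.sum_add_distrib]
          rw [h]; exact dvd_add (ha j) (hb j)
        neg_mem' := by
          intro a ha j
          have h : ∑ i ∈ descendants e s j, (-a) i = -∑ i ∈ descendants e s j, a i := by
            simp
          rw [h]; exact (ha j).neg_right }
    have hgen : Set.range (deltaRow e s) ⊆ K := by
      rintro _ ⟨i, rfl⟩ j
      rw [rowsum htree hp i j]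
      by_cases h1 : i = j
      · have h2 : p j ≠ i.1 := fun h => (parent_ne hp j) (h1 ▸ h)
        rw [if_pos h1, if_neg h2, sub_zero]
      · rw [if_neg h1, zero_sub]
        by_cases h2 : p j = i.1
        · rw [if_pos h2]
          have h3 : (e i.1 j.1 : ℤ) = (e j.1 (p j) : ℤ) := by
            rw [← h2, hsym (p j) j.1]
          rw [h3]
          exact (dvd_refl _).neg_right
        · rw [if_neg h2, neg_zero]
          exact dvd_zero _
    exact ((AddSubgroup.closure_le K).mpr hgen) hv
  · intro hdvd
    set q : {i : V // i ≠ s} → ℤ :=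
      fun j => (∑ i ∈ descendants e s j, v i) / (e j.1 (p j)) with hqdef
    have hq : ∀ j, (e j.1 (p j) : ℤ) * q j = ∑ i ∈ descendants e s j, v i :=
      fun j => Int.mul_ediv_cancel' (hdvd j)
    set c : {i : V // i ≠ s} → ℤ :=
      fun i => ∑ k ∈ Finset.univ.filter (fun k : {i : V // i ≠ s} => succeq e s i.1 k.1), q k
      with hcdef
    set w : {i : V // i ≠ s} → ℤ := ∑ i : {i : V // i ≠ s}, c i • deltaRow e s i with hwdef
    have hw_mem : w ∈ lattice e s :=
      AddSubgroup.sum_mem _ fun i _ =>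
        AddSubgroup.zsmul_mem _ (AddSubgroup.subset_closure (Set.mem_range_self i)) _
    have hSw : ∀ j, ∑ k ∈ descendants e s j, w k = ∑ k ∈ descendants e s j, v k := by
      intro j
      have h1 : ∑ k ∈ descendants e s j, w k
          = ∑ t : {i : V // i ≠ s}, c t * ∑ k ∈ descendants e s j, deltaRow e s t k := by
        rw [hwdef]
        calc ∑ k ∈ descendants e s j, (∑ t : {i : V // i ≠ s}, c t • deltaRow e s t) k
            = ∑ k ∈ descendants e s j, ∑ t : {i : V // i ≠ s}, c t * deltaRow e s t k := by
              refine Finset.sum_congr rfl fun k _ => ?_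
              rw [Finset.sum_apply]
              exact Finset.sum_congr rfl fun t _ => by
                simp only [Pi.smul_apply, smul_eq_mul]
          _ = ∑ t : {i : V // i ≠ s}, ∑ k ∈ descendants e s j, c t * deltaRow e s t k :=
              Finset.sum_comm
          _ = ∑ t : {i : V // i ≠ s}, c t * ∑ k ∈ descendants e s j, deltaRow e s t k := by
              refine Finset.sum_congr rfl fun t _ => (Finset.mul_sum _ _ _).symm
      rw [h1]
      have h2 : ∀ t : {i : V // i ≠ s}, c t * ∑ k ∈ descendants e s j, deltaRow e s t k
          = (if t = j then c j * (e j.1 (p j) : ℤ) else 0)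
            - (if p j = t.1 then c t * (e t.1 j.1 : ℤ) else 0) := by
        intro t
        rw [rowsum htree hp t j]
        by_cases ht1 : t = j
        · have ht2 : p j ≠ t.1 := fun h => (parent_ne hp j) (ht1 ▸ h)
          rw [if_pos ht1, if_neg ht2, if_pos ht1, if_neg ht2, ht1]
          ring
        · rw [if_neg ht1, if_neg ht1]
          by_cases ht2 : p j = t.1
          · rw [if_pos ht2, if_pos ht2]; ring
          · rw [if_neg ht2, if_neg ht2]; ring
      rw [Finset.sum_congr rfl fun t _ => h2 t, Finset.sum_sub_distrib,
        Finset.sum_ite_eq' Finset.univ j (fun _ => c j * (e j.1 (p j) : ℤ)),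
        if_pos (Finset.mem_univ _)]
      by_cases hps : p j = s
      · have hzero : ∑ t : {i : V // i ≠ s},
            (if p j = t.1 then c t * (e t.1 j.1 : ℤ) else 0) = 0 :=
          Finset.sum_eq_zero fun t _ => if_neg (fun h => t.2 (by rw [← h]; exact hps))
        have hcj : c j = q j := by
          have hc0 : c j = ∑ k ∈ Finset.univ.filter
              (fun k : {i : V // i ≠ s} => succeq e s j.1 k.1), q k := rfl
          have hfil : Finset.univ.filter (fun k : {i : V // i ≠ s} => succeq e s j.1 k.1)
              = {j} := by
            ext k
            simp only [Finset.mem_filter, Finset.mem_univ, true_and, Finset.mem_singleton]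
            rw [step_iff htree hp j k.1]
            constructor
            · rintro (h | h)
              · exact Subtype.ext h.symm
              · exact absurd h (by rw [hps]; exact not_succeq_sink htree k.2)
            · rintro rfl
              exact Or.inl rfl
          rw [hc0, hfil, Finset.sum_singleton]
        rw [hzero, sub_zero, hcj, mul_comm]
        exact hq j
      · have hsum2 : ∑ t : {i : V // i ≠ s},
            (if p j = t.1 then c t * (e t.1 j.1 : ℤ) else 0)
            = c ⟨p j, hps⟩ * (e (p j) j.1 : ℤ) := by
          rw [Finset.sum_eq_single (⟨p j, hps⟩ : {i : V // i ≠ s})]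
          · rw [if_pos rfl]
          · intro t _ htne
            exact if_neg (fun h => htne (Subtype.ext h.symm))
          · intro h; exact absurd (Finset.mem_univ _) h
        have hcsplit : c j = q j + c ⟨p j, hps⟩ := by
          have hc0 : c j = ∑ k ∈ Finset.univ.filter
              (fun k : {i : V // i ≠ s} => succeq e s j.1 k.1), q k := rfl
          have hfil : Finset.univ.filter (fun k : {i : V // i ≠ s} => succeq e s j.1 k.1)
              = insert j (Finset.univ.filter
                  (fun k : {i : V // i ≠ s} => succeq e s (p j) k.1)) := by
            ext k
            simp only [Finset.mem_filter, Finset.mem_univ, true_and, Finset.mem_insert]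
            rw [step_iff htree hp j k.1]
            constructor
            · rintro (h | h)
              · exact Or.inl (Subtype.ext h.symm)
              · exact Or.inr h
            · rintro (rfl | h)
              · exact Or.inl rfl
              · exact Or.inr h
          rw [hc0, hfil, Finset.sum_insert (by
            simp only [Finset.mem_filter, Finset.mem_univ, true_and]
            exact not_parent_succeq htree hp j)]
        rw [hsum2, hcsplit]
        have he : (e (p j) j.1 : ℤ) = (e j.1 (p j) : ℤ) := by rw [hsym]
        rw [he]
        calc (q j + c ⟨p j, hps⟩) * (e j.1 (p j) : ℤ) - c ⟨p j, hps⟩ * (e j.1 (p j) : ℤ)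
            = (e j.1 (p j) : ℤ) * q j := by ring
          _ = _ := hq j
    have hz : ∀ j, (fun k => v k - w k) j = 0 := by
      apply eq_zero_of_sums htree
      intro j
      rw [Finset.sum_sub_distrib, hSw j, sub_self]
    have hvw : v = w := funext fun j => sub_eq_zero.mp (hz j)
    rw [hvw]
    exact hw_mem

end SandpilePaper
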